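/- Let -1 < ℓ < 0, λ > 0, and for 0 ≤ t ≤ s define the kernel K(t,s) = exp(-2λ[A(s) - A(t)]) ((1+t)/(1+s))^ℓ, where A(t) = ((1+t)^{ℓ+1}-1)/(ℓ+1). Then for all t ≥ 0: ∫_t^∞ K(t,s)(1+s)^{-2} ds ≤ (1/(2λ)) (1+t)^{-ℓ-2}, and ∫_t^∞ K(t,s)(1+s)^{-2ℓ-4} ds ≤ (1/(2λ)) (1+t)^{-3ℓ-4}. -/

import Mathlib

open MeasureTheory Set Filter Topology

private lemma hasDerivAt_B (ℓ : ℝ) (hℓ1 : -1 < ℓ) (s : ℝ) (hs : -1 < s) :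
    HasDerivAt (fun x : ℝ => ((1 + x) ^ (ℓ + 1) - 1) / (ℓ + 1)) ((1 + s) ^ ℓ) s := by
  have hs0 : (0:ℝ) < 1 + s := by linarith
  have hl0 : ℓ + 1 ≠ 0 := by linarith
  have h1 : HasDerivAt (fun x : ℝ => 1 + x) 1 s := by
    simpa using (hasDerivAt_id s).const_add 1
  have h2 : HasDerivAt (fun x : ℝ => (1 + x) ^ (ℓ + 1))
      (1 * (ℓ + 1) * (1 + s) ^ (ℓ + 1 - 1)) s :=
    h1.rpow_const (Or.inl hs0.ne')
  have h3 := (h2.sub_const 1).div_const (ℓ + 1)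
  refine h3.congr_deriv ?_
  rw [add_sub_cancel_right]
  field_simp

private lemma aux_int (ℓ lam t q : ℝ) (hℓ1 : -1 < ℓ) (hℓ2 : ℓ < 0) (hlam : 0 < lam)
    (ht : 0 ≤ t) (hq : q - 2 * ℓ ≤ 0) :
    (∫ s in Set.Ioi t, Real.exp (-2 * lam *
        (((1 + s) ^ (ℓ + 1) - 1) / (ℓ + 1) - ((1 + t) ^ (ℓ + 1) - 1) / (ℓ + 1))) *
        ((1 + t) / (1 + s)) ^ ℓ * (1 + s) ^ q)
      ≤ 1 / (2 * lam) * (1 + t) ^ (q - ℓ) := by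
  have ht1 : (0:ℝ) < 1 + t := by linarith
  set B : ℝ → ℝ := fun x => ((1 + x) ^ (ℓ + 1) - 1) / (ℓ + 1) with hBdef
  set f : ℝ → ℝ := fun s => Real.exp (-2 * lam * (B s - B t)) * (1 + s) ^ ℓ with hfdef
  set g : ℝ → ℝ := fun s => -(Real.exp (-2 * lam * (B s - B t)) / (2 * lam)) with hgdef
  set h : ℝ → ℝ := fun s => Real.exp (-2 * lam * (B s - B t)) *
      ((1 + t) / (1 + s)) ^ ℓ * (1 + s) ^ q with hhdef
  have hderivg : ∀ s : ℝ, -1 < s → HasDerivAt g (f s) s := by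
    intro s hs
    have hB := hasDerivAt_B ℓ hℓ1 s hs
    have h1 : HasDerivAt (fun x => -2 * lam * (B x - B t)) (-2 * lam * (1 + s) ^ ℓ) s :=
      (hB.sub_const (B t)).const_mul (-2 * lam)
    have h2 := ((h1.exp).div_const (2 * lam)).neg
    refine h2.congr_deriv ?_
    simp only [hfdef]
    field_simp
  have hBtop : Tendsto B atTop atTop := by
    have h1 : Tendsto (fun x : ℝ => 1 + x) atTop atTop :=
      tendsto_atTop_add_const_left _ 1 tendsto_id
    have h2 : Tendsto (fun x : ℝ => (1 + x) ^ (ℓ + 1)) atTop atTop :=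
      (tendsto_rpow_atTop (by linarith : (0:ℝ) < ℓ + 1)).comp h1
    have h3 : Tendsto (fun x : ℝ => (1 + x) ^ (ℓ + 1) - 1) atTop atTop := by
      simpa [sub_eq_add_neg] using tendsto_atTop_add_const_right _ (-1) h2
    exact h3.atTop_div_const (by linarith)
  have hexp : Tendsto (fun s => -2 * lam * (B s - B t)) atTop atBot := by
    have h1 : Tendsto (fun s => B s - B t) atTop atTop := by
      simpa [sub_eq_add_neg] using tendsto_atTop_add_const_right _ (-B t) hBtop
    have h2 : Tendsto (fun s => 2 * lam * (B s - B t)) atTop atTop :=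
      h1.const_mul_atTop (by linarith)
    have h3 := tendsto_neg_atTop_atBot.comp h2
    refine h3.congr fun s => ?_
    simp only [Function.comp_apply]
    ring
  have hg0 : Tendsto g atTop (𝓝 0) := by
    have h1 := Real.tendsto_exp_atBot.comp hexp
    have h2 := (h1.div_const (2 * lam)).neg
    have h3 : Tendsto g atTop (𝓝 (-(0 / (2 * lam)))) :=
      h2.congr fun s => by simp only [hgdef, Function.comp_apply]
    simpa using h3
  have hcont : ContinuousWithinAt g (Set.Ici t) t :=
    (hderivg t (by linarith)).continuousAt.continuousWithinAt
  have hderiv' : ∀ x ∈ Set.Ioi t, HasDerivAt g (f x) x := fun x hx =>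
    hderivg x (by have := Set.mem_Ioi.mp hx; linarith)
  have hfnn : ∀ x ∈ Set.Ioi t, 0 ≤ f x := by
    intro x hx
    have hx1 : (0:ℝ) < 1 + x := by have := Set.mem_Ioi.mp hx; linarith
    exact mul_nonneg (Real.exp_pos _).le (Real.rpow_nonneg hx1.le _)
  have hIntEq : ∫ s in Set.Ioi t, f s = 0 - g t :=
    integral_Ioi_of_hasDerivAt_of_nonneg hcont hderiv' hfnn hg0
  have hgt : g t = -(1 / (2 * lam)) := by simp [hgdef]
  have hIntVal : ∫ s in Set.Ioi t, f s = 1 / (2 * lam) := by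
    rw [hIntEq, hgt]; ring
  have hIntf : IntegrableOn f (Set.Ioi t) :=
    integrableOn_Ioi_deriv_of_nonneg hcont hderiv' hfnn hg0
  set C : ℝ := (1 + t) ^ (q - ℓ) with hCdef
  have hbound : ∀ s ∈ Set.Ioi t, h s ≤ C * f s := by
    intro s hs
    have hst : t < s := Set.mem_Ioi.mp hs
    have hs1 : (0:ℝ) < 1 + s := by linarith
    have e1 : ((1 + t) / (1 + s)) ^ ℓ = (1 + t) ^ ℓ / (1 + s) ^ ℓ :=
      Real.div_rpow ht1.le hs1.le ℓ
    have e2 : (1 + s) ^ q / (1 + s) ^ ℓ = (1 + s) ^ (q - ℓ) :=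
      (Real.rpow_sub hs1 q ℓ).symm
    have e3 : (1 + s) ^ (q - ℓ) = (1 + s) ^ (q - 2 * ℓ) * (1 + s) ^ ℓ := by
      rw [← Real.rpow_add hs1, show q - 2 * ℓ + ℓ = q - ℓ from by ring]
    have e4 : (1 + s) ^ (q - 2 * ℓ) ≤ (1 + t) ^ (q - 2 * ℓ) :=
      Real.rpow_le_rpow_of_nonpos ht1 (by linarith) hq
    have hCeq : C = (1 + t) ^ (q - 2 * ℓ) * (1 + t) ^ ℓ := by
      rw [hCdef, ← Real.rpow_add ht1, show q - 2 * ℓ + ℓ = q - ℓ from by ring]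
    have key : h s = ((1 + s) ^ (q - 2 * ℓ) * (1 + t) ^ ℓ) * f s := by
      simp only [hhdef, hfdef]
      rw [e1]
      rw [show Real.exp (-2 * lam * (B s - B t)) * ((1 + t) ^ ℓ / (1 + s) ^ ℓ) * (1 + s) ^ q
          = Real.exp (-2 * lam * (B s - B t)) * (1 + t) ^ ℓ * ((1 + s) ^ q / (1 + s) ^ ℓ) from by
          ring, e2, e3]
      ring
    rw [key, hCeq]
    have hfs := hfnn s hs
    have : (1 + s) ^ (q - 2 * ℓ) * (1 + t) ^ ℓ ≤ (1 + t) ^ (q - 2 * ℓ) * (1 + t) ^ ℓ :=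
      mul_le_mul_of_nonneg_right e4 (Real.rpow_nonneg ht1.le ℓ)
    exact mul_le_mul_of_nonneg_right this hfs
  have hhnn : ∀ s ∈ Set.Ioi t, 0 ≤ h s := by
    intro s hs
    have hst : t < s := Set.mem_Ioi.mp hs
    have hs1 : (0:ℝ) < 1 + s := by linarith
    exact mul_nonneg (mul_nonneg (Real.exp_pos _).le
      (Real.rpow_nonneg (div_nonneg ht1.le hs1.le) _)) (Real.rpow_nonneg hs1.le _)
  have hmeas : AEStronglyMeasurable h (volume.restrict (Set.Ioi t)) := by
    have hconth : ContinuousOn h (Set.Ioi t) := by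
      intro s hs
      have hst : t < s := Set.mem_Ioi.mp hs
      have hs1 : (0:ℝ) < 1 + s := by linarith
      apply ContinuousAt.continuousWithinAt
      have c1 : ContinuousAt B s := (hasDerivAt_B ℓ hℓ1 s (by linarith)).continuousAt
      have ci : ContinuousAt (fun x => -2 * lam * (B x - B t)) s :=
        (c1.sub continuousAt_const).const_mul _
      have c2 : ContinuousAt (fun x : ℝ => Real.exp (-2 * lam * (B x - B t))) s :=
        Real.continuous_exp.continuousAt.comp ci
      have c3 : ContinuousAt (fun x : ℝ => ((1 + t) / (1 + x)) ^ ℓ) s := by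
        apply ContinuousAt.rpow_const
        · exact continuousAt_const.div (continuousAt_const.add continuousAt_id) hs1.ne'
        · left
          exact (div_pos ht1 hs1).ne'
      have c4 : ContinuousAt (fun x : ℝ => (1 + x) ^ q) s :=
        (continuousAt_const.add continuousAt_id).rpow_const (Or.inl hs1.ne')
      exact (c2.mul c3).mul c4
    exact hconth.aestronglyMeasurable measurableSet_Ioi
  have hInth : IntegrableOn h (Set.Ioi t) := by
    apply Integrable.mono' (hIntf.const_mul C) hmeas
    filter_upwards [ae_restrict_mem measurableSet_Ioi] with s hs
    rw [Real.norm_eq_abs, abs_of_nonneg (hhnn s hs)]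
    exact hbound s hs
  calc (∫ s in Set.Ioi t, h s) ≤ ∫ s in Set.Ioi t, C * f s :=
        setIntegral_mono_on hInth (hIntf.const_mul C) measurableSet_Ioi hbound
    _ = C * ∫ s in Set.Ioi t, f s := integral_const_mul C f
    _ = 1 / (2 * lam) * (1 + t) ^ (q - ℓ) := by rw [hIntVal, hCdef]; ring

theorem stmt_16 (ℓ : ℝ) (hℓ1 : -1 < ℓ) (hℓ2 : ℓ < 0) (lam : ℝ) (hlam : 0 < lam)
    (A : ℝ → ℝ) (hA : ∀ t : ℝ, A t = ((1 + t) ^ (ℓ + 1) - 1) / (ℓ + 1))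
    (K : ℝ → ℝ → ℝ)
    (hK : ∀ t s : ℝ, K t s = Real.exp (-2 * lam * (A s - A t)) * ((1 + t) / (1 + s)) ^ ℓ) :
    ∀ t : ℝ, 0 ≤ t →
      (∫ s in Set.Ioi t, K t s * (1 + s) ^ (-2 : ℝ)) ≤ 1 / (2 * lam) * (1 + t) ^ (-ℓ - 2) ∧
      (∫ s in Set.Ioi t, K t s * (1 + s) ^ (-2 * ℓ - 4)) ≤
        1 / (2 * lam) * (1 + t) ^ (-3 * ℓ - 4) := by
  intro t ht
  constructor
  · have h := aux_int ℓ lam t (-2) hℓ1 hℓ2 hlam ht (by linarith)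
    rw [show (-2 : ℝ) - ℓ = -ℓ - 2 from by ring] at h
    simpa only [hK, hA, mul_assoc] using h
  · have h := aux_int ℓ lam t (-2 * ℓ - 4) hℓ1 hℓ2 hlam ht (by linarith)
    rw [show (-2 * ℓ - 4 : ℝ) - ℓ = -3 * ℓ - 4 from by ring] at h
    simpa only [hK, hA, mul_assoc] using h
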